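/- A function φ : [0,∞) → [0,1) is an MT-function if and only if for every eventually nonincreasing sequence {x_n} in [0,∞), sup_n φ(x_n) < 1. -/

import Mathlib

open Filter Set Topology

/-- `MTfun φ`: φ is an MT-function, i.e. `limsup_{s→t⁺} φ(s) < 1` for all `t ≥ 0`. -/
def MTfun (φ : ℝ → ℝ) : Prop :=
  ∀ t : ℝ, 0 ≤ t → Filter.limsup φ (nhdsWithin t (Set.Ioi t)) < 1

/-- `MTlfun λ μ`: μ is an MT(λ)-function, i.e. `limsup_{s→t⁺} μ(s) < λ` for all `t ≥ 0`. -/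
def MTlfun (l : ℝ) (μ : ℝ → ℝ) : Prop :=
  ∀ t : ℝ, 0 ≤ t → Filter.limsup μ (nhdsWithin t (Set.Ioi t)) < l

theorem stmt_8 (φ : ℝ → ℝ) (hmap : ∀ t : ℝ, 0 ≤ t → 0 ≤ φ t ∧ φ t < 1) :
    MTfun φ ↔ ∀ x : ℕ → ℝ, (∀ n, 0 ≤ x n) →
      (∃ l : ℕ, ∀ n ≥ l, x (n + 1) ≤ x n) → (⨆ n, φ (x n)) < 1 := by
  constructor
  · rintro hMT x hx ⟨l, hl⟩
    -- the shifted sequence is antitone and bounded below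
    set y : ℕ → ℝ := fun n => x (n + l) with hy
    have hyanti : Antitone y := by
      apply antitone_nat_of_succ_le
      intro n
      have : x (n + l + 1) ≤ x (n + l) := hl (n + l) (Nat.le_add_left l n)
      simpa [hy, Nat.add_right_comm] using this
    have hybdd : BddBelow (Set.range y) := ⟨0, by rintro _ ⟨n, rfl⟩; exact hx _⟩
    set T : ℝ := ⨅ n, y n with hT
    have hytend : Tendsto y atTop (𝓝 T) := tendsto_atTop_ciInf hyanti hybdd
    have hT0 : 0 ≤ T := le_ciInf fun n => hx _
    have hTy : ∀ n, T ≤ y n := fun n => ciInf_le hybdd n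
    -- use the MT property at T
    have hlim := hMT T hT0
    set b : ℝ := (Filter.limsup φ (nhdsWithin T (Set.Ioi T)) + 1) / 2 with hb
    have hlb : Filter.limsup φ (nhdsWithin T (Set.Ioi T)) < b := by
      rw [hb]; linarith
    have hb1 : b < 1 := by rw [hb]; linarith
    have hbdd : IsBoundedUnder (· ≤ ·) (nhdsWithin T (Set.Ioi T)) φ := by
      refine ⟨1, eventually_map.mpr ?_⟩
      filter_upwards [self_mem_nhdsWithin] with s hs
      exact le_of_lt (hmap s (le_of_lt (lt_of_le_of_lt hT0 hs))).2
    have hev : ∀ᶠ s in nhdsWithin T (Set.Ioi T), φ s < b :=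
      Filter.eventually_lt_of_limsup_lt hlb hbdd
    rw [eventually_iff, mem_nhdsGT_iff_exists_Ioc_subset] at hev
    obtain ⟨u, hu, husub⟩ := hev
    have hu' : T < u := hu
    have hevy : ∀ᶠ n in atTop, y n < u := hytend.eventually_lt_const hu'
    obtain ⟨N, hN⟩ := eventually_atTop.mp hevy
    set c1 : ℝ := max b (φ T) with hc1
    have hc1lt : c1 < 1 := max_lt hb1 (hmap T hT0).2
    have htail : ∀ m ≥ N + l, φ (x m) ≤ c1 := by
      intro m hm
      have hml : l ≤ m := le_trans (Nat.le_add_left l N) hm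
      have he : m - l + l = m := by omega
      have hxm : x m = y (m - l) := by
        simp only [hy, he]
      have hmn : N ≤ m - l := by omega
      have h1 : y (m - l) < u := hN _ hmn
      have h2 : T ≤ y (m - l) := hTy _
      rcases eq_or_lt_of_le h2 with heq | hlt
      · rw [hxm, ← heq]; exact le_max_right _ _
      · have : φ (y (m - l)) < b := husub ⟨hlt, le_of_lt h1⟩
        rw [hxm]; exact le_trans (le_of_lt this) (le_max_left _ _)
    set c : ℝ := max c1 ((Finset.range (N + l + 1)).sup' (by simp) fun n => φ (x n)) with hc
    have hclt : c < 1 := by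
      apply max_lt hc1lt
      rw [Finset.sup'_lt_iff]
      intro n _
      exact (hmap _ (hx n)).2
    have : (⨆ n, φ (x n)) ≤ c := by
      apply ciSup_le
      intro n
      rcases le_or_gt n (N + l) with h | h
      · refine le_trans ?_ (le_max_right _ _)
        have hmem : n ∈ Finset.range (N + l + 1) := Finset.mem_range.mpr (by omega)
        exact Finset.le_sup' (fun n => φ (x n)) hmem
      · exact le_trans (htail n (by omega)) (le_max_left _ _)
    exact lt_of_le_of_lt this hclt
  · intro h t ht
    by_contra hcon
    push_neg at hcon
    have hbddge : IsBoundedUnder (· ≥ ·) (nhdsWithin t (Set.Ioi t)) φ := by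
      refine ⟨0, eventually_map.mpr ?_⟩
      filter_upwards [self_mem_nhdsWithin] with s hs
      exact (hmap s (le_of_lt (lt_of_le_of_lt ht hs))).1
    have hcob : IsCoboundedUnder (· ≤ ·) (nhdsWithin t (Set.Ioi t)) φ :=
      hbddge.isCoboundedUnder_le
    have key : ∀ n : ℕ, ∀ a : ℝ, t < a →
        ∃ s, t < s ∧ s < a ∧ 1 - 1 / (n + 1) < φ s := by
      intro n a ha
      have h1 : (1 : ℝ) - 1 / (n + 1) < 1 := by
        have : (0:ℝ) < 1 / (n + 1) := by positivity
        linarith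
      have hfreq : ∃ᶠ s in nhdsWithin t (Set.Ioi t), 1 - 1 / (n + 1) < φ s :=
        Filter.frequently_lt_of_lt_limsup hcob (lt_of_lt_of_le h1 hcon)
      have hmem : Set.Ioo t a ∈ nhdsWithin t (Set.Ioi t) :=
        Ioo_mem_nhdsGT_of_mem ⟨le_refl t, ha⟩
      obtain ⟨s, hs1, hs2⟩ := (hfreq.and_eventually (eventually_of_mem hmem fun _ h => h)).exists
      exact ⟨s, hs2.1, hs2.2, hs1⟩
    choose! f hf1 hf2 hf3 using key
    set x : ℕ → ℝ := fun n => Nat.rec (f 0 (t + 1)) (fun m xm => f (m + 1) xm) n with hxdef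
    have hxpos : ∀ n, t < x n := by
      intro n
      induction n with
      | zero => exact hf1 0 (t + 1) (by linarith)
      | succ m ih => exact hf1 (m + 1) (x m) ih
    have hxdec : ∀ n, x (n + 1) ≤ x n := fun n => le_of_lt (hf2 (n + 1) (x n) (hxpos n))
    have hxphi : ∀ n : ℕ, 1 - 1 / (n + 1) < φ (x n) := by
      intro n
      cases n with
      | zero => exact hf3 0 (t + 1) (by linarith)
      | succ m => exact hf3 (m + 1) (x m) (hxpos m)
    have hsup := h x (fun n => le_of_lt (lt_of_le_of_lt ht (hxpos n))) ⟨0, fun n _ => hxdec n⟩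
    have hbddS : BddAbove (Set.range fun n => φ (x n)) := by
      refine ⟨1, ?_⟩
      rintro _ ⟨n, rfl⟩
      exact le_of_lt (hmap _ (le_of_lt (lt_of_le_of_lt ht (hxpos n)))).2
    have hge : ∀ n : ℕ, 1 - 1 / (n + 1) ≤ ⨆ n, φ (x n) := fun n =>
      le_trans (le_of_lt (hxphi n)) (le_ciSup hbddS n)
    have h1le : (1 : ℝ) ≤ ⨆ n, φ (x n) := by
      have htend : Tendsto (fun n : ℕ => 1 - 1 / ((n : ℝ) + 1)) atTop (𝓝 1) := by
        have := tendsto_one_div_add_atTop_nhds_zero_nat (𝕜 := ℝ)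
        have h2 := (tendsto_const_nhds (x := (1:ℝ)) (f := atTop)).sub this
        simpa using h2
      exact le_of_tendsto htend (Filter.Eventually.of_forall hge)
    linarith
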